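/- A stable configuration a is critical if and only if c_max − a is superstable, where c_max = (d₁⁺−1,...,d_n⁺−1). Consequently, the number of critical configurations equals the number of superstable configurations. -/

import Mathlib

/-- A finite directed multigraph without loops on `Fin (n+1)` with global sink `Fin.last n`. -/
structure SinkDigraph (n : ℕ) where
  e : Fin (n + 1) → Fin (n + 1) → ℕ
  loopless : ∀ i, e i i = 0
  sink_no_out : ∀ j, e (Fin.last n) j = 0
  path_to_sink : ∀ i, Relation.ReflTransGen (fun u v => 0 < e u v) i (Fin.last n)

namespace SinkDigraph

variable {n : ℕ}

/-- Out-degree of a vertex. -/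
def outDeg (G : SinkDigraph n) (i : Fin (n + 1)) : ℕ := ∑ j, G.e i j

/-- The (full) Laplacian matrix over ℤ. -/
def lap (G : SinkDigraph n) : Matrix (Fin (n + 1)) (Fin (n + 1)) ℤ :=
  Matrix.of fun i j => if i = j then (G.outDeg i : ℤ) else -(G.e i j : ℤ)

/-- The reduced Laplacian (rows/columns of the sink removed). -/
def redLap (G : SinkDigraph n) : Matrix (Fin n) (Fin n) ℤ :=
  Matrix.of fun i j => G.lap i.castSucc j.castSucc

/-- The reduced Laplacian over ℚ. -/
def redLapQ (G : SinkDigraph n) : Matrix (Fin n) (Fin n) ℚ :=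
  (G.redLap).map (Int.cast : ℤ → ℚ)

/-- A ℕ-script viewed as integer vector. -/
def natScript (σ : Fin n → ℕ) : Fin n → ℤ := fun i => (σ i : ℤ)

/-- Result of firing vertex `i` in configuration `a`. -/
def fire (G : SinkDigraph n) (a : Fin n → ℤ) (i : Fin n) : Fin n → ℤ :=
  fun j => a j - G.redLap i j

/-- Result of firing a sequence of vertices. -/
def applySeq (G : SinkDigraph n) : (Fin n → ℤ) → List (Fin n) → (Fin n → ℤ)
  | a, [] => a
  | a, i :: s => G.applySeq (G.fire a i) s

/-- A firing sequence is legal from `a` if every fired vertex is active when fired. -/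
def Legal (G : SinkDigraph n) : (Fin n → ℤ) → List (Fin n) → Prop
  | _, [] => True
  | a, i :: s => G.redLap i i ≤ a i ∧ G.Legal (G.fire a i) s

/-- The firing script of a firing sequence. -/
def script (s : List (Fin n)) : Fin n → ℤ := fun i => (s.count i : ℤ)

/-- A configuration is stable if it is non-negative and no vertex is active. -/
def IsStable (G : SinkDigraph n) (a : Fin n → ℤ) : Prop :=
  ∀ i, 0 ≤ a i ∧ a i < G.redLap i i

/-- `b` is the stabilization of `a`. -/
def Stabilizes (G : SinkDigraph n) (a b : Fin n → ℤ) : Prop :=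
  ∃ s : List (Fin n), G.Legal a s ∧ G.applySeq a s = b ∧ G.IsStable b

/-- The maximal stable configuration `c_max`. -/
def cmax (G : SinkDigraph n) : Fin n → ℤ := fun i => (G.outDeg i.castSucc : ℤ) - 1

/-- A stable configuration is critical if it is the stabilization of `c_max + c`
for some non-negative `c`. -/
def IsCritical (G : SinkDigraph n) (a : Fin n → ℤ) : Prop :=
  ∃ c : Fin n → ℤ, 0 ≤ c ∧ G.Stabilizes (G.cmax + c) a

/-- `σΔ ≻ 0`, i.e. `σΔ` is non-negative and non-zero. -/
def GPositive (G : SinkDigraph n) (σ : Fin n → ℕ) : Prop :=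
  0 ≤ Matrix.vecMul (natScript σ) G.redLap ∧ Matrix.vecMul (natScript σ) G.redLap ≠ 0

/-- Reachability along directed edges. -/
def Reach (G : SinkDigraph n) : Fin (n + 1) → Fin (n + 1) → Prop :=
  Relation.ReflTransGen (fun u v => 0 < G.e u v)

/-- A source component: a strongly connected component with no in-going edge from outside. -/
def IsSourceComponent (G : SinkDigraph n) (S : Set (Fin (n + 1))) : Prop :=
  (∃ i, S = {j | G.Reach i j ∧ G.Reach j i}) ∧ ∀ j ∉ S, ∀ k ∈ S, G.e j k = 0

/-- A `G`-strongly positive script. -/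
def GStronglyPositive (G : SinkDigraph n) (σ : Fin n → ℕ) : Prop :=
  G.GPositive σ ∧ ∀ S : Set (Fin (n + 1)), G.IsSourceComponent S →
    ∃ i : Fin n, i.castSucc ∈ S ∧ Matrix.vecMul (natScript σ) G.redLap i ≠ 0

/-- Linear equivalence of configurations. -/
def Equiv (G : SinkDigraph n) (a b : Fin n → ℤ) : Prop :=
  ∃ σ : Fin n → ℤ, b - a = Matrix.vecMul σ G.redLap

/-- The weight of a configuration. -/
def weight (a : Fin n → ℤ) : ℤ := ∑ i, a i

/-- The energy (CFG) order: compare energy vectors `aΔ⁻¹` componentwise over ℚ. -/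
def cfgLE (G : SinkDigraph n) (a b : Fin n → ℤ) : Prop :=
  Matrix.vecMul (fun i => (a i : ℚ)) (G.redLapQ)⁻¹ ≤
    Matrix.vecMul (fun i => (b i : ℚ)) (G.redLapQ)⁻¹

/-- A non-negative configuration is superstable if reverse-firing any nonzero ℕ-script
produces a negative component. -/
def IsSuperstable (G : SinkDigraph n) (a : Fin n → ℤ) : Prop :=
  0 ≤ a ∧ ∀ σ : Fin n → ℕ, σ ≠ 0 →
    ∃ i, a i - Matrix.vecMul (natScript σ) G.redLap i < 0

end SinkDigraph

namespace SinkDigraph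

variable {n : ℕ} (G : SinkDigraph n)

lemma outDeg_pos (i : Fin n) : 0 < G.outDeg i.castSucc := by
  have h := G.path_to_sink i.castSucc
  have hne : i.castSucc ≠ Fin.last n := (Fin.castSucc_lt_last i).ne
  rcases h.cases_head with h' | ⟨b, hb, _⟩
  · exact absurd h' hne
  · calc 0 < G.e i.castSucc b := hb
    _ ≤ G.outDeg i.castSucc := Finset.single_le_sum (fun j _ => Nat.zero_le _) (Finset.mem_univ b)

lemma redLap_diag (i : Fin n) : G.redLap i i = (G.outDeg i.castSucc : ℤ) := by
  simp [redLap, lap]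

lemma redLap_offdiag {i j : Fin n} (h : i ≠ j) : G.redLap i j = -(G.e i.castSucc j.castSucc : ℤ) := by
  simp [redLap, lap, h]

lemma redLap_offdiag_nonpos {i j : Fin n} (h : i ≠ j) : G.redLap i j ≤ 0 := by
  rw [G.redLap_offdiag h]; simp

lemma vecMul_redLap_apply (y : Fin n → ℤ) (j : Fin n) :
    Matrix.vecMul y G.redLap j = ∑ i, y i * G.redLap i j := by
  simp [Matrix.vecMul, dotProduct]

/-- If a non-negative script does not use `j`, reverse-firing it cannot decrease entry `j`. -/
lemma vecMul_nonpos_of_zero_at {y : Fin n → ℤ} (hy : 0 ≤ y) {j : Fin n} (hj : y j = 0) :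
    Matrix.vecMul y G.redLap j ≤ 0 := by
  rw [G.vecMul_redLap_apply]
  refine Finset.sum_nonpos fun i _ => ?_
  rcases eq_or_ne i j with rfl | hij
  · simp [hj]
  · exact mul_nonpos_of_nonneg_of_nonpos (hy i) (G.redLap_offdiag_nonpos hij)

lemma script_cons (i : Fin n) (s : List (Fin n)) (j : Fin n) :
    script (i :: s) j = script s j + (if i = j then 1 else 0) := by
  rcases eq_or_ne i j with rfl | hij
  · simp [script, List.count_cons]
  · simp [script, List.count_cons, hij, Ne.symm hij]

lemma vecMul_script_cons (i : Fin n) (s : List (Fin n)) (j : Fin n) :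
    Matrix.vecMul (script (i :: s)) G.redLap j
      = Matrix.vecMul (script s) G.redLap j + G.redLap i j := by
  rw [G.vecMul_redLap_apply, G.vecMul_redLap_apply]
  have : ∀ k, script (i :: s) k * G.redLap k j
      = script s k * G.redLap k j + (if i = k then 1 else 0) * G.redLap k j := by
    intro k; rw [script_cons, add_mul]
  simp only [this, Finset.sum_add_distrib]
  congr 1
  simp [Finset.sum_ite_eq]

lemma applySeq_eq (s : List (Fin n)) : ∀ b : Fin n → ℤ,
    G.applySeq b s = fun j => b j - Matrix.vecMul (script s) G.redLap j := by
  induction s with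
  | nil => intro b; funext j; simp [applySeq, script, Matrix.vecMul, dotProduct]
  | cons i s ih =>
      intro b
      funext j
      show G.applySeq (G.fire b i) s j = _
      rw [ih]
      simp only [fire, G.vecMul_script_cons]
      ring

lemma applySeq_append (s t : List (Fin n)) : ∀ b,
    G.applySeq b (s ++ t) = G.applySeq (G.applySeq b s) t := by
  induction s with
  | nil => intro b; rfl
  | cons i s ih => intro b; exact ih (G.fire b i)

lemma legal_append {s t : List (Fin n)} : ∀ {b}, G.Legal b s → G.Legal (G.applySeq b s) t →
    G.Legal b (s ++ t) := by
  induction s with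
  | nil => intro b _ ht; exact ht
  | cons i s ih =>
      intro b hs ht
      exact ⟨hs.1, ih hs.2 ht⟩

lemma legal_mono {s : List (Fin n)} : ∀ {b b' : Fin n → ℤ}, b ≤ b' → G.Legal b s → G.Legal b' s := by
  induction s with
  | nil => intro _ _ _ _; trivial
  | cons i s ih =>
      intro b b' hbb hs
      refine ⟨le_trans hs.1 (hbb i), ih (fun j => ?_) hs.2⟩
      simp only [fire]
      exact sub_le_sub_right (hbb j) _

lemma applySeq_nonneg {s : List (Fin n)} : ∀ {b : Fin n → ℤ}, 0 ≤ b → G.Legal b s →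
    0 ≤ G.applySeq b s := by
  induction s with
  | nil => intro b hb _; exact hb
  | cons i s ih =>
      intro b hb hs
      refine ih (fun j => ?_) hs.2
      simp only [fire]
      rcases eq_or_ne j i with rfl | hji
      · exact sub_nonneg.mpr hs.1
      · have h2 : i ≠ j := Ne.symm hji
        have := G.redLap_offdiag_nonpos h2
        linarith [hb j]

end SinkDigraph

namespace SinkDigraph

variable {n : ℕ} (G : SinkDigraph n)

lemma natScript_update (σ : Fin n → ℕ) (i : Fin n) (k : ℕ) (hk : σ i = k + 1) (j : Fin n) :
    natScript σ j = natScript (Function.update σ i k) j + (if i = j then 1 else 0) := by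
  rcases eq_or_ne i j with rfl | hij
  · simp [natScript, hk, Function.update]
  · simp [natScript, Function.update, Ne.symm hij, hij]

/-- Least action principle: any legal sequence's script is bounded by any script whose
reverse-firing makes every vertex inactive. -/
lemma least_action (s : List (Fin n)) : ∀ (b : Fin n → ℤ) (σ : Fin n → ℕ),
    G.Legal b s →
    (∀ i, b i - Matrix.vecMul (natScript σ) G.redLap i < G.redLap i i) →
    ∀ i, (s.count i : ℕ) ≤ σ i := by
  induction s with
  | nil => intro b σ _ _ i; simp
  | cons j s ih =>
      intro b σ hleg hst i
      obtain ⟨hj, hs⟩ := hleg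
      have hσj : σ j ≠ 0 := by
        intro h0
        have hnp : Matrix.vecMul (natScript σ) G.redLap j ≤ 0 :=
          G.vecMul_nonpos_of_zero_at (fun k => Int.natCast_nonneg _) (by simp [natScript, h0])
        have := hst j
        omega
      obtain ⟨k, hk⟩ := Nat.exists_eq_succ_of_ne_zero hσj
      set σ' := Function.update σ j k with hσ'
      have hvm : ∀ m, Matrix.vecMul (natScript σ) G.redLap m
          = Matrix.vecMul (natScript σ') G.redLap m + G.redLap j m := by
        intro m
        rw [G.vecMul_redLap_apply, G.vecMul_redLap_apply]
        have : ∀ p, natScript σ p * G.redLap p m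
            = natScript σ' p * G.redLap p m + (if j = p then 1 else 0) * G.redLap p m := by
          intro p; rw [natScript_update σ j k hk, add_mul]
        simp only [this, Finset.sum_add_distrib]
        congr 1
        simp [Finset.sum_ite_eq]
      have hst' : ∀ m, G.fire b j m - Matrix.vecMul (natScript σ') G.redLap m < G.redLap m m := by
        intro m
        have := hst m
        rw [hvm m] at this
        simp only [fire]
        omega
      have hcount := ih (G.fire b j) σ' hs hst'
      have hci := hcount i
      rcases eq_or_ne i j with rfl | hij
      · have hupd : σ' i = k := by simp [hσ']
        simp only [List.count_cons, beq_self_eq_true, if_true]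
        omega
      · have hupd : σ' i = σ i := by simp [hσ', Function.update, hij]
        have : (s.count i : ℕ) = (j :: s).count i := by simp [List.count_cons, hij, Ne.symm hij]
        omega

end SinkDigraph

namespace SinkDigraph

open Matrix

variable {n : ℕ} (G : SinkDigraph n)

lemma redLapQ_apply (i j : Fin n) : G.redLapQ i j = ((G.redLap i j : ℤ) : ℚ) := rfl

lemma cast_vecMul (y : Fin n → ℤ) (j : Fin n) :
    ((Matrix.vecMul y G.redLap j : ℤ) : ℚ)
      = Matrix.vecMul (fun i => ((y i : ℤ) : ℚ)) G.redLapQ j := by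
  rw [G.vecMul_redLap_apply]
  simp [Matrix.vecMul, dotProduct, redLapQ_apply]

/-- Maximum principle: if `Δ *ᵥ y` is non-negative then `y` is non-negative. -/
lemma mulVec_nonneg {y : Fin n → ℚ} (h : ∀ i, 0 ≤ (G.redLapQ *ᵥ y) i) : ∀ i, 0 ≤ y i := by
  intro i₁
  set yy : Fin (n + 1) → ℚ := Fin.snoc y 0 with hyy
  have hne : (Finset.univ : Finset (Fin (n + 1))).Nonempty := Finset.univ_nonempty
  set m : ℚ := Finset.univ.inf' hne yy with hm
  have hmle : ∀ v, m ≤ yy v := fun v => Finset.inf'_le _ (Finset.mem_univ v)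
  -- a single edge step preserves attaining the minimum
  have step : ∀ u v : Fin (n + 1), 0 < G.e u v → yy u = m → yy v = m := by
    intro u v huv hu
    have hune : u ≠ Fin.last n := by
      intro hlast
      rw [hlast, G.sink_no_out v] at huv
      exact lt_irrefl 0 huv
    obtain ⟨i₀, rfl⟩ := Fin.exists_castSucc_eq.mpr hune
    have hyi : y i₀ = m := by rw [← hu, hyy]; simp
    -- rewrite the hypothesis at i₀ as a sum over all n+1 vertices
    have hexp : (G.redLapQ *ᵥ y) i₀
        = ∑ w : Fin (n + 1), (G.e i₀.castSucc w : ℚ) * (yy i₀.castSucc - yy w) := by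
      have houtd : ((G.outDeg i₀.castSucc : ℕ) : ℚ)
          = ∑ w : Fin (n + 1), (G.e i₀.castSucc w : ℚ) := by
        simp [outDeg]
      have hsum : ∑ w : Fin (n + 1), (G.e i₀.castSucc w : ℚ) * yy w
          = ∑ j : Fin n, (G.e i₀.castSucc j.castSucc : ℚ) * y j := by
        rw [Fin.sum_univ_castSucc]
        simp [hyy]
      have hQ : ∀ j : Fin n, G.redLapQ i₀ j
          = (if i₀ = j then ((G.outDeg i₀.castSucc : ℕ) : ℚ) else 0)
            - (G.e i₀.castSucc j.castSucc : ℚ) := by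
        intro j
        rcases eq_or_ne i₀ j with rfl | hij
        · simp [redLapQ_apply, redLap, lap, G.loopless]
        · have : i₀.castSucc ≠ j.castSucc := fun hc => hij (Fin.castSucc_inj.mp hc)
          simp [redLapQ_apply, redLap, lap, hij, this]
      calc (G.redLapQ *ᵥ y) i₀ = ∑ j : Fin n, G.redLapQ i₀ j * y j := by
            simp [Matrix.mulVec, dotProduct]
        _ = ((G.outDeg i₀.castSucc : ℕ) : ℚ) * y i₀
            - ∑ j : Fin n, (G.e i₀.castSucc j.castSucc : ℚ) * y j := by
            simp only [hQ, sub_mul, Finset.sum_sub_distrib]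
            congr 1
            simp [Finset.sum_ite_eq]
        _ = _ := by
            rw [← hsum, houtd, Finset.sum_mul, ← Finset.sum_sub_distrib]
            refine Finset.sum_congr rfl fun w _ => ?_
            have : yy i₀.castSucc = y i₀ := by rw [hyy]; simp
            rw [this]; ring
    have hterm_nonpos : ∀ w : Fin (n + 1),
        (G.e i₀.castSucc w : ℚ) * (yy i₀.castSucc - yy w) ≤ 0 := by
      intro w
      apply mul_nonpos_of_nonneg_of_nonpos (by positivity)
      have : yy i₀.castSucc = m := hu
      rw [this]
      linarith [hmle w]
    have hzero : ∀ w ∈ Finset.univ,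
        (G.e i₀.castSucc w : ℚ) * (yy i₀.castSucc - yy w) = 0 := by
      rw [← Finset.sum_eq_zero_iff_of_nonpos (fun w _ => hterm_nonpos w)]
      have h1 := h i₀
      rw [hexp] at h1
      have h2 : ∑ w : Fin (n + 1), (G.e i₀.castSucc w : ℚ) * (yy i₀.castSucc - yy w) ≤ 0 :=
        Finset.sum_nonpos fun w _ => hterm_nonpos w
      linarith
    have := hzero v (Finset.mem_univ v)
    have hepos : (0 : ℚ) < (G.e i₀.castSucc v : ℚ) := by exact_mod_cast huv
    have : yy i₀.castSucc - yy v = 0 := by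
      rcases mul_eq_zero.mp this with h' | h'
      · exact absurd h' (ne_of_gt hepos)
      · exact h'
    have := sub_eq_zero.mp this
    rw [← this, hu]
  -- the minimum propagates to the sink along any path
  have prop : ∀ {u v : Fin (n + 1)}, Relation.ReflTransGen (fun a b => 0 < G.e a b) u v →
      yy u = m → yy v = m := by
    intro u v hpath
    induction hpath with
    | refl => exact id
    | tail _ hbc ihp => exact fun hu => step _ _ hbc (ihp hu)
  obtain ⟨v₀, _, hv₀⟩ := Finset.exists_mem_eq_inf' hne yy
  have hlast : yy (Fin.last n) = m := prop (G.path_to_sink v₀) hv₀.symm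
  have hm0 : m = 0 := by rw [← hlast, hyy]; simp
  have := hmle i₁.castSucc
  rw [hm0] at this
  simpa [hyy] using this

lemma isUnit_det : IsUnit G.redLapQ.det := by
  rw [isUnit_iff_ne_zero]
  intro hdet
  obtain ⟨v, hv0, hv⟩ := (Matrix.exists_mulVec_eq_zero_iff).mpr hdet
  have h1 : ∀ i, 0 ≤ v i := G.mulVec_nonneg (by rw [hv]; intro i; simp)
  have h2 : ∀ i, 0 ≤ (-v) i := G.mulVec_nonneg (by
    intro i
    have : G.redLapQ *ᵥ (-v) = -(G.redLapQ *ᵥ v) := by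
      rw [Matrix.mulVec_neg]
    rw [this, hv]
    simp)
  exact hv0 (funext fun i => le_antisymm (by simpa using h2 i) (h1 i))

lemma inv_entries_nonneg (i j : Fin n) : 0 ≤ G.redLapQ⁻¹ i j := by
  have hdet := G.isUnit_det
  have hmul := Matrix.mul_nonsing_inv _ hdet
  have : ∀ k, 0 ≤ (G.redLapQ *ᵥ fun p => G.redLapQ⁻¹ p j) k := by
    intro k
    have : (G.redLapQ *ᵥ fun p => G.redLapQ⁻¹ p j) k = (G.redLapQ * G.redLapQ⁻¹) k j := by
      simp [Matrix.mulVec, dotProduct, Matrix.mul_apply]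
    rw [this, hmul]
    by_cases hkj : k = j <;> simp [Matrix.one_apply, hkj]
  exact G.mulVec_nonneg this i

end SinkDigraph

namespace SinkDigraph

open Matrix

variable {n : ℕ} (G : SinkDigraph n)

lemma vecMul_inv_mono {u v : Fin n → ℚ} (h : ∀ i, u i ≤ v i) (j : Fin n) :
    Matrix.vecMul u G.redLapQ⁻¹ j ≤ Matrix.vecMul v G.redLapQ⁻¹ j := by
  simp only [Matrix.vecMul, dotProduct]
  exact Finset.sum_le_sum fun i _ =>
    mul_le_mul_of_nonneg_right (h i) (G.inv_entries_nonneg i j)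

lemma vecMul_cancel (w : Fin n → ℚ) :
    Matrix.vecMul (Matrix.vecMul w G.redLapQ) G.redLapQ⁻¹ = w := by
  rw [Matrix.vecMul_vecMul, Matrix.mul_nonsing_inv _ G.isUnit_det, Matrix.vecMul_one]

lemma exists_dominating_script (d : Fin n → ℤ) :
    ∃ τ : Fin n → ℕ, ∀ i, d i ≤ Matrix.vecMul (natScript τ) G.redLap i := by
  classical
  set x : Fin n → ℚ := Matrix.vecMul (fun _ => (1 : ℚ)) G.redLapQ⁻¹ with hx
  have hx_nonneg : ∀ i, 0 ≤ x i := by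
    intro i
    rw [hx]
    simp only [Matrix.vecMul, dotProduct, one_mul]
    exact Finset.sum_nonneg fun k _ => G.inv_entries_nonneg k i
  have hxQ : Matrix.vecMul x G.redLapQ = fun _ => (1 : ℚ) := by
    rw [hx, Matrix.vecMul_vecMul, Matrix.nonsing_inv_mul _ G.isUnit_det, Matrix.vecMul_one]
  set N : ℕ := ∏ j, (x j).den with hN
  have hN1 : 1 ≤ N := Nat.one_le_iff_ne_zero.mpr (by
    rw [hN]
    exact Finset.prod_ne_zero_iff.mpr fun j _ => (x j).den_nz)
  set z : Fin n → ℤ := fun i => (x i).num * ((N / (x i).den : ℕ) : ℤ) with hzdef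
  have hz : ∀ i, ((z i : ℤ) : ℚ) = x i * N := by
    intro i
    have hdvd : (x i).den ∣ N := Finset.dvd_prod_of_mem _ (Finset.mem_univ i)
    have hden : ((x i).den : ℚ) ≠ 0 := by exact_mod_cast (x i).den_nz
    have hnum : ((x i).num : ℚ) = x i * (x i).den := by
      calc ((x i).num : ℚ) = ((x i).num : ℚ) / (x i).den * (x i).den := by
            rw [div_mul_cancel₀ _ hden]
        _ = x i * (x i).den := by rw [Rat.num_div_den (x i)]
    have hNc : ((N / (x i).den : ℕ) : ℚ) * ((x i).den : ℚ) = (N : ℚ) := by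
      rw [← Nat.cast_mul, Nat.div_mul_cancel hdvd]
    calc ((z i : ℤ) : ℚ) = ((x i).num : ℚ) * ((N / (x i).den : ℕ) : ℚ) := by
          rw [hzdef]; rw [Int.cast_mul, Int.cast_natCast]
      _ = x i * (((N / (x i).den : ℕ) : ℚ) * ((x i).den : ℚ)) := by rw [hnum]; ring
      _ = x i * N := by rw [hNc]
  have hz_nonneg : ∀ i, 0 ≤ z i := by
    intro i
    exact mul_nonneg (Rat.num_nonneg.mpr (hx_nonneg i)) (Int.natCast_nonneg _)
  have hzΔ : ∀ i, Matrix.vecMul z G.redLap i = (N : ℤ) := by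
    intro i
    have hcast : ((Matrix.vecMul z G.redLap i : ℤ) : ℚ) = (N : ℚ) := by
      rw [G.cast_vecMul]
      have : (fun k => ((z k : ℤ) : ℚ)) = fun k => (N : ℚ) * x k := by
        funext k; rw [hz k]; ring
      rw [this]
      have hsmul : Matrix.vecMul (fun k => (N : ℚ) * x k) G.redLapQ
          = fun j => (N : ℚ) * Matrix.vecMul x G.redLapQ j := by
        funext j
        simp only [Matrix.vecMul, dotProduct, Finset.mul_sum]
        exact Finset.sum_congr rfl fun k _ => by ring
      rw [hsmul, hxQ]
      simp
    exact_mod_cast hcast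
  set K : ℕ := Finset.univ.sup fun i => (d i).toNat with hK
  refine ⟨fun i => K * (z i).toNat, fun i => ?_⟩
  have hns : natScript (fun i => K * (z i).toNat) = fun i => (K : ℤ) * z i := by
    funext i
    simp [natScript, Int.toNat_of_nonneg (hz_nonneg i)]
  have : Matrix.vecMul (fun i => (K : ℤ) * z i) G.redLap i
      = (K : ℤ) * Matrix.vecMul z G.redLap i := by
    rw [G.vecMul_redLap_apply, G.vecMul_redLap_apply, Finset.mul_sum]
    exact Finset.sum_congr rfl fun k _ => by ring
  rw [hns, this, hzΔ]
  have hdK : d i ≤ (K : ℤ) := by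
    have h1 : d i ≤ ((d i).toNat : ℤ) := Int.self_le_toNat _
    have h2 : (d i).toNat ≤ K := Finset.le_sup (f := fun i => (d i).toNat) (Finset.mem_univ i)
    omega
  have : (K : ℤ) ≤ (K : ℤ) * N := by nlinarith [Int.natCast_nonneg K, show (1:ℤ) ≤ (N:ℤ) from by exact_mod_cast hN1]
  omega

end SinkDigraph

namespace SinkDigraph

open Matrix

variable {n : ℕ} (G : SinkDigraph n)

lemma cmax_eq (i : Fin n) : G.cmax i = G.redLap i i - 1 := by
  rw [G.redLap_diag]; rfl

lemma length_eq_sum_count (s : List (Fin n)) : s.length = ∑ i, s.count i := by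
  induction s with
  | nil => simp
  | cons j s ih =>
      have : ∀ i : Fin n, (j :: s).count i = s.count i + (if i = j then 1 else 0) := by
        intro i
        rcases eq_or_ne i j with rfl | hij
        · simp [List.count_cons]
        · simp [List.count_cons, hij, Ne.symm hij]
      simp only [this, Finset.sum_add_distrib, Finset.sum_ite_eq', Finset.mem_univ, if_true]
      simp [ih]

lemma vecMul_sub_script (τ : Fin n → ℕ) (s : List (Fin n))
    (w : Fin n → ℤ) (hw : ∀ j, w j = (τ j : ℤ) - (s.count j : ℤ)) (j : Fin n) :
    Matrix.vecMul (natScript τ) G.redLap j - Matrix.vecMul (script s) G.redLap j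
      = Matrix.vecMul w G.redLap j := by
  rw [G.vecMul_redLap_apply, G.vecMul_redLap_apply, G.vecMul_redLap_apply,
    ← Finset.sum_sub_distrib]
  refine Finset.sum_congr rfl fun k _ => ?_
  rw [hw k]
  simp [natScript, script]
  ring

lemma critical_to_super {a : Fin n → ℤ} (ha : G.IsStable a) (hc : G.IsCritical a) :
    G.IsSuperstable (G.cmax - a) := by
  obtain ⟨c, hc0, s, hleg, happ, _⟩ := hc
  constructor
  · intro i
    have h1 := (ha i).2
    have h2 := G.cmax_eq i
    simp only [Pi.sub_apply, Pi.zero_apply]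
    omega
  · intro σ hσ
    by_contra hno
    push_neg at hno
    set ρ : Fin n → ℕ := fun i => s.count i with hρ
    have hscript : script s = natScript ρ := rfl
    have happ' : ∀ j, a j = (G.cmax + c) j - Matrix.vecMul (natScript ρ) G.redLap j := by
      intro j
      rw [← happ, G.applySeq_eq, hscript]
    have hρΔ : ∀ j, Matrix.vecMul (natScript ρ) G.redLap j = G.cmax j + c j - a j := by
      intro j
      have := happ' j
      simp only [Pi.add_apply] at this
      omega
    -- over ℚ: σ ≤ ρ
    have hle : ∀ i, σ i ≤ ρ i := by
      intro i
      have e1 : ∀ y : Fin n → ℤ, (fun k => ((y k : ℤ) : ℚ))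
          = Matrix.vecMul (fun k => ((Matrix.vecMul y G.redLap k : ℤ) : ℚ)) G.redLapQ⁻¹ := by
        intro y
        have hcv : (fun k => ((Matrix.vecMul y G.redLap k : ℤ) : ℚ))
            = Matrix.vecMul (fun k => ((y k : ℤ) : ℚ)) G.redLapQ := funext fun k => G.cast_vecMul y k
        rw [hcv, G.vecMul_cancel]
      have hineq : ∀ j, ((Matrix.vecMul (natScript σ) G.redLap j : ℤ) : ℚ)
          ≤ ((Matrix.vecMul (natScript ρ) G.redLap j : ℤ) : ℚ) := by
        intro j
        have h1 := hno j
        simp only [Pi.sub_apply] at h1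
        have h2 := hc0 j
        simp only [Pi.zero_apply] at h2
        rw [hρΔ j]
        exact_mod_cast by omega
      have hmono := G.vecMul_inv_mono hineq i
      have eσ := congrFun (e1 (natScript σ)) i
      have eρ := congrFun (e1 (natScript ρ)) i
      rw [← eσ, ← eρ] at hmono
      have : ((σ i : ℕ) : ℚ) ≤ ((ρ i : ℕ) : ℚ) := by
        simpa [natScript] using hmono
      exact_mod_cast this
    set σstar : Fin n → ℕ := fun i => ρ i - σ i with hσstar
    have hwval : ∀ j, natScript σstar j = (ρ j : ℤ) - (σ j : ℤ) := by
      intro j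
      simp [natScript, hσstar, Nat.cast_sub (hle j)]
    have hsubstable : ∀ i, (G.cmax + c) i - Matrix.vecMul (natScript σstar) G.redLap i
        < G.redLap i i := by
      intro i
      have hvm : Matrix.vecMul (natScript ρ) G.redLap i - Matrix.vecMul (natScript σ) G.redLap i
          = Matrix.vecMul (natScript σstar) G.redLap i := by
        rw [G.vecMul_redLap_apply, G.vecMul_redLap_apply, G.vecMul_redLap_apply,
          ← Finset.sum_sub_distrib]
        refine Finset.sum_congr rfl fun k _ => ?_
        rw [hwval k]
        simp [natScript]
        ring
      have h1 := hno i
      simp only [Pi.sub_apply] at h1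
      have h2 := hρΔ i
      have h3 := G.cmax_eq i
      simp only [Pi.add_apply] at *
      omega
    have hLAP := G.least_action s (G.cmax + c) σstar hleg hsubstable
    refine hσ (funext fun i => ?_)
    have h1 := hLAP i
    have h2 := hle i
    have h3 : σstar i = ρ i - σ i := rfl
    have h4 : ρ i = s.count i := rfl
    simp only [Pi.zero_apply]
    omega

lemma super_to_critical {a : Fin n → ℤ} (ha : G.IsStable a)
    (hs : G.IsSuperstable (G.cmax - a)) : G.IsCritical a := by
  classical
  obtain ⟨τ, hτ⟩ := G.exists_dominating_script (fun i => G.cmax i - a i)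
  set T : Fin n → ℤ := Matrix.vecMul (natScript τ) G.redLap with hT
  have hTd : ∀ i, G.cmax i - a i ≤ T i := fun i => hτ i
  set b : Fin n → ℤ := fun j => a j + T j with hb
  have hcmax0 : ∀ j, 0 ≤ G.cmax j := by
    intro j
    have := G.outDeg_pos j
    show (0 : ℤ) ≤ (G.outDeg j.castSucc : ℤ) - 1
    omega
  have hb0 : (0 : Fin n → ℤ) ≤ b := by
    intro j
    have h1 := hTd j
    have h2 := hcmax0 j
    simp only [hb, Pi.zero_apply]
    omega
  set K : ℕ := ∑ i, τ i with hK
  set P : ℕ → Prop := fun k => ∃ s : List (Fin n),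
    G.Legal b s ∧ (∀ i, s.count i ≤ τ i) ∧ s.length = k with hP
  have hP0 : P 0 := ⟨[], trivial, by simp, rfl⟩
  have hbdd : ∀ k, P k → k ≤ K := by
    rintro k ⟨s, _, h2, rfl⟩
    rw [length_eq_sum_count s]
    exact Finset.sum_le_sum fun i _ => h2 i
  set k₀ := Nat.findGreatest P K with hk₀
  have hPk₀ : P k₀ := Nat.findGreatest_spec (Nat.zero_le _) hP0
  have hnot : ¬ P (k₀ + 1) := by
    rcases le_or_gt (k₀ + 1) K with h | h
    · exact Nat.findGreatest_is_greatest (Nat.lt_succ_self k₀) h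
    · exact fun hp => absurd (hbdd _ hp) (by omega)
  obtain ⟨s, hleg, hcount, hlen₀⟩ := hPk₀
  have hrval : ∀ j, G.applySeq b s j
      = a j + (T j - Matrix.vecMul (script s) G.redLap j) := by
    intro j
    rw [G.applySeq_eq]
    show b j - _ = _
    simp only [hb]
    ring
  set w : Fin n → ℤ := fun j => (τ j : ℤ) - (s.count j : ℤ) with hwdef
  have hw0 : 0 ≤ w := by
    intro j
    have := hcount j
    simp only [hwdef, Pi.zero_apply]
    omega
  have hTsub : ∀ j, T j - Matrix.vecMul (script s) G.redLap j
      = Matrix.vecMul w G.redLap j := by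
    intro j
    rw [hT]
    exact G.vecMul_sub_script τ s w (fun k => rfl) j
  have hrstable : G.IsStable (G.applySeq b s) := by
    intro i
    refine ⟨G.applySeq_nonneg hb0 hleg i, ?_⟩
    by_contra hact
    push_neg at hact
    have hbudget : s.count i < τ i := by
      by_contra hfull
      push_neg at hfull
      have hwi : w i = 0 := by
        have := hcount i
        simp only [hwdef]
        omega
      have hnp : Matrix.vecMul w G.redLap i ≤ 0 := G.vecMul_nonpos_of_zero_at hw0 hwi
      have h1 := hrval i
      rw [hTsub i] at h1
      have h2 := (ha i).2
      omega
    have hleg' : G.Legal b (s ++ [i]) := G.legal_append hleg ⟨hact, trivial⟩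
    refine hnot ⟨s ++ [i], hleg', fun j => ?_, by simp [hlen₀]⟩
    rw [List.count_append]
    rcases eq_or_ne j i with rfl | hji
    · simp only [List.count_singleton]
      simp
      omega
    · have : ([i].count j) = 0 := by simp [List.count_singleton, Ne.symm hji]
      rw [this]
      simpa using hcount j
  set σ : Fin n → ℕ := fun j => τ j - s.count j with hσdef
  have hσw : natScript σ = w := by
    funext j
    simp [natScript, hσdef, hwdef, Nat.cast_sub (hcount j)]
  have hra : ∀ j, G.applySeq b s j = a j + Matrix.vecMul (natScript σ) G.redLap j := by
    intro j
    rw [hrval j, hTsub j, hσw]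
  have hσ0 : σ = 0 := by
    by_contra hne
    obtain ⟨i, hi⟩ := hs.2 σ hne
    have h1 := (hrstable i).2
    have h2 := G.cmax_eq i
    have h3 := hra i
    simp only [Pi.sub_apply] at hi
    omega
  have hr_eq : G.applySeq b s = a := by
    funext j
    rw [hra j, hσ0]
    have : Matrix.vecMul (natScript (0 : Fin n → ℕ)) G.redLap j = 0 := by
      rw [G.vecMul_redLap_apply]
      simp [natScript]
    rw [this]
    ring
  refine ⟨fun j => b j - G.cmax j, ?_, s, ?_, ?_, ha⟩
  · intro j
    have := hTd j
    simp only [hb, Pi.zero_apply]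
    omega
  · have : G.cmax + (fun j => b j - G.cmax j) = b := by
      funext j
      simp
    rw [this]
    exact hleg
  · have : G.cmax + (fun j => b j - G.cmax j) = b := by
      funext j
      simp
    rw [this]
    exact hr_eq

end SinkDigraph

namespace SinkDigraph

variable {n : ℕ} (G : SinkDigraph n)

lemma superstable_lt_diag {d : Fin n → ℤ} (hd : G.IsSuperstable d) (i : Fin n) :
    d i < G.redLap i i := by
  classical
  set σ : Fin n → ℕ := fun j => if j = i then 1 else 0 with hσ
  have hσne : σ ≠ 0 := by
    intro h
    have := congrFun h i
    simp [hσ] at this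
  obtain ⟨j, hj⟩ := hd.2 σ hσne
  have hvm : Matrix.vecMul (natScript σ) G.redLap j = G.redLap i j := by
    rw [G.vecMul_redLap_apply]
    have : ∀ k, natScript σ k * G.redLap k j = (if k = i then G.redLap i j else 0) := by
      intro k
      rcases eq_or_ne k i with rfl | hki
      · simp [natScript, hσ]
      · simp [natScript, hσ, hki]
    simp only [this, Finset.sum_ite_eq', Finset.mem_univ, if_true]
  rw [hvm] at hj
  have hji : j = i := by
    by_contra hji
    have h1 := G.redLap_offdiag_nonpos (show i ≠ j from Ne.symm hji)
    have h2 := hd.1 j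
    simp only [Pi.zero_apply] at h2
    omega
  rw [hji] at hj
  omega

lemma superstable_cmax_sub_stable {d : Fin n → ℤ} (hd : G.IsSuperstable d) :
    G.IsStable (G.cmax - d) := by
  intro i
  have h1 := G.superstable_lt_diag hd i
  have h2 := hd.1 i
  simp only [Pi.zero_apply] at h2
  have h3 := G.cmax_eq i
  constructor
  · simp only [Pi.sub_apply]
    omega
  · simp only [Pi.sub_apply]
    omega

end SinkDigraph


open SinkDigraph Matrix

theorem duality (n : ℕ) (G : SinkDigraph n) :
    (∀ a : Fin n → ℤ, G.IsStable a →
      (G.IsCritical a ↔ G.IsSuperstable (G.cmax - a))) ∧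
    {a : Fin n → ℤ | G.IsCritical a}.ncard = {a : Fin n → ℤ | G.IsSuperstable a}.ncard := by
  have h1 : ∀ a, G.IsStable a → (G.IsCritical a ↔ G.IsSuperstable (G.cmax - a)) :=
    fun a ha => ⟨G.critical_to_super ha, G.super_to_critical ha⟩
  refine ⟨h1, ?_⟩
  have hcs : ∀ a, G.IsCritical a → G.IsStable a := by
    rintro a ⟨c, _, s, _, _, hst⟩
    exact hst
  have himg : {a : Fin n → ℤ | G.IsSuperstable a}
      = (fun a => G.cmax - a) '' {a : Fin n → ℤ | G.IsCritical a} := by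
    ext d
    simp only [Set.mem_setOf_eq, Set.mem_image]
    constructor
    · intro hd
      have hst := G.superstable_cmax_sub_stable hd
      have hdd : G.cmax - (G.cmax - d) = d := by
        funext j
        simp
      refine ⟨G.cmax - d, ?_, hdd⟩
      exact (h1 _ hst).mpr (by rwa [hdd])
    · rintro ⟨a, hca, rfl⟩
      exact (h1 a (hcs a hca)).mp hca
  rw [himg, Set.ncard_image_of_injective _ (fun x y hxy => by
    have : G.cmax - x = G.cmax - y := hxy
    funext j
    have := congrFun this j
    simp only [Pi.sub_apply] at this
    omega)]
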